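/- arXiv:2212.00866 — 2 statements merged into one kernel-verified Lean document; each statement's English description precedes it below -/
import Mathlib

section
/- Let A ∈ ℝ^{n×n}, G ∈ ℝ^{n×m}, C ∈ ℝ^{m×n} and suppose A − G C is such that ‖exp(t(A−GC))‖ ≤ M exp(−α t) for all t ≥ 0 with M ≥ 1, α > 0. Let g : ℝⁿ → ℝⁿ and ĝ : ℝⁿ → ℝⁿ satisfy ‖ĝ(u) − g(v)‖ ≤ L‖u − v‖ + ε for all u, v, with M·L < α. If x solves ẋ = A x + g(x), y = C x, and x̂ solves x̂' = A x̂ + ĝ(x̂) + G(y − C x̂), then for all t ≥ 0, ‖x̂(t) − x(t)‖ ≤ M·exp((ML − α)t)·‖x̂(0) − x(0)‖ + Mε/(α − ML). -/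
open scoped Matrix

open NormedSpace MeasureTheory

/-- Scalar integral Grönwall lemma with exponential forcing term. -/
private lemma aux_gronwall (u : ℝ → ℝ) (hu : Continuous u) (c K b β : ℝ)
    (hK : 0 ≤ K) (hb : 0 ≤ b) (hβK : K < β)
    (H : ∀ t, 0 ≤ t → u t ≤ c + ∫ s in (0:ℝ)..t, (K * u s + b * Real.exp (β * s))) :
    ∀ t, 0 ≤ t →
      u t ≤ c * Real.exp (K * t) + b / (β - K) * (Real.exp (β * t) - Real.exp (K * t)) := by
  have hβK0 : (0:ℝ) < β - K := by linarith
  set ψ : ℝ → ℝ := fun τ => c + ∫ s in (0:ℝ)..τ, (K * u s + b * Real.exp (β * s)) with hψdef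
  have hcont : Continuous fun s => K * u s + b * Real.exp (β * s) :=
    ((continuous_const.mul hu).add
      (continuous_const.mul (Real.continuous_exp.comp (continuous_const.mul continuous_id))))
  have hψ : ∀ τ, HasDerivAt ψ (K * u τ + b * Real.exp (β * τ)) τ := by
    intro τ
    have h1 := intervalIntegral.integral_hasDerivAt_right
      (hcont.intervalIntegrable 0 τ)
      (hcont.stronglyMeasurableAtFilter _ _)
      hcont.continuousAt
    exact h1.const_add c
  have hE : ∀ (a τ : ℝ), HasDerivAt (fun x => Real.exp (a * x)) (a * Real.exp (a * τ)) τ := by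
    intro a τ
    have h1 := (Real.hasDerivAt_exp (a * τ)).comp τ ((hasDerivAt_id τ).const_mul a)
    rw [show a * Real.exp (a * τ) = Real.exp (a * τ) * (a * 1) by ring]
    exact h1
  set w : ℝ → ℝ := fun τ => Real.exp (-K * τ) * ψ τ - b / (β - K) * Real.exp ((β - K) * τ)
    with hwdef
  have hw : ∀ τ, HasDerivAt w
      ((-K) * Real.exp (-K * τ) * ψ τ
        + Real.exp (-K * τ) * (K * u τ + b * Real.exp (β * τ))
        - b / (β - K) * ((β - K) * Real.exp ((β - K) * τ))) τ :=
    fun τ => ((hE (-K) τ).mul (hψ τ)).sub (((hE (β - K) τ)).const_mul (b / (β - K)))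
  have hanti : AntitoneOn w (Set.Ici (0:ℝ)) := by
    apply antitoneOn_of_deriv_nonpos (convex_Ici 0)
    · exact (continuous_iff_continuousAt.mpr fun τ => (hw τ).continuousAt).continuousOn
    · intro τ _
      exact (hw τ).differentiableAt.differentiableWithinAt
    · intro τ hτ
      have hτ0 : (0:ℝ) ≤ τ := by
        rw [interior_Ici] at hτ
        exact le_of_lt hτ
      rw [(hw τ).deriv]
      have huψ : u τ ≤ ψ τ := H τ hτ0
      have hprod : Real.exp (-K * τ) * Real.exp (β * τ) = Real.exp ((β - K) * τ) := by
        rw [← Real.exp_add]; congr 1; ring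
      have hdiv : b / (β - K) * ((β - K) * Real.exp ((β - K) * τ))
          = b * Real.exp ((β - K) * τ) := by
        field_simp
      rw [hdiv]
      nlinarith [mul_nonneg (mul_nonneg hK (Real.exp_pos (-K * τ)).le)
        (sub_nonneg.2 huψ), hprod]
  intro t ht
  have hwt : w t ≤ w 0 := hanti (Set.self_mem_Ici) ht ht
  have hψ0 : ψ 0 = c := by simp [hψdef]
  have hw0 : w 0 = c - b / (β - K) := by simp [hwdef, hψ0]
  rw [hw0] at hwt
  have hmul := mul_le_mul_of_nonneg_right hwt (Real.exp_pos (K * t)).le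
  have e1 : Real.exp (-K * t) * Real.exp (K * t) = 1 := by
    rw [← Real.exp_add]
    have : -K * t + K * t = 0 := by ring
    rw [this, Real.exp_zero]
  have e2 : Real.exp ((β - K) * t) * Real.exp (K * t) = Real.exp (β * t) := by
    rw [← Real.exp_add]; congr 1; ring
  have hL : (Real.exp (-K * t) * ψ t - b / (β - K) * Real.exp ((β - K) * t)) * Real.exp (K * t)
      = ψ t - b / (β - K) * Real.exp (β * t) := by
    calc (Real.exp (-K * t) * ψ t - b / (β - K) * Real.exp ((β - K) * t)) * Real.exp (K * t)
        = Real.exp (-K * t) * Real.exp (K * t) * ψ t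
          - b / (β - K) * (Real.exp ((β - K) * t) * Real.exp (K * t)) := by ring
      _ = ψ t - b / (β - K) * Real.exp (β * t) := by rw [e1, e2]; ring
  have hwt' : ψ t - b / (β - K) * Real.exp (β * t)
      ≤ (c - b / (β - K)) * Real.exp (K * t) := by
    rw [← hL]; exact hmul
  have hU : u t ≤ ψ t := H t ht
  nlinarith [hwt', hU]

set_option maxHeartbeats 1600000 in
/-- Luenberger-like observer error bound for a system with partially known dynamics:
if `‖exp(t(A-GC))‖ ≤ M e^{-α t}`, `‖ĝ u - g v‖ ≤ L‖u-v‖ + ε` and `M L < α`, then the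
observer error satisfies
`‖x̂ t - x t‖ ≤ M e^{(ML-α)t} ‖x̂ 0 - x 0‖ + M ε / (α - M L)`. -/
theorem luenberger_like_observer_bound
    (n m : ℕ)
    (A : Matrix (Fin n) (Fin n) ℝ) (G : Matrix (Fin n) (Fin m) ℝ)
    (C : Matrix (Fin m) (Fin n) ℝ)
    (M α : ℝ) (hM : 1 ≤ M) (hα : 0 < α)
    (hexp : ∀ t : ℝ, 0 ≤ t →
      ‖(Matrix.toEuclideanLin (NormedSpace.exp (t • (A - G * C)))).toContinuousLinearMap‖
        ≤ M * Real.exp (-α * t))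
    (g ghat : EuclideanSpace ℝ (Fin n) → EuclideanSpace ℝ (Fin n))
    (L ε : ℝ) (hL : 0 ≤ L) (hε : 0 ≤ ε) (hMLα : M * L < α)
    (hg : ∀ u v, ‖ghat u - g v‖ ≤ L * ‖u - v‖ + ε)
    (x xhat : ℝ → EuclideanSpace ℝ (Fin n))
    (hx : ∀ t, HasDerivAt x (Matrix.toEuclideanLin A (x t) + g (x t)) t)
    (hxhat : ∀ t, HasDerivAt xhat
      (Matrix.toEuclideanLin A (xhat t) + ghat (xhat t)
        + Matrix.toEuclideanLin G
            (Matrix.toEuclideanLin C (x t) - Matrix.toEuclideanLin C (xhat t))) t) :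
    ∀ t : ℝ, 0 ≤ t →
      ‖xhat t - x t‖ ≤ M * Real.exp ((M * L - α) * t) * ‖xhat 0 - x 0‖
        + M * ε / (α - M * L) := by
  have hM0 : (0:ℝ) < M := lt_of_lt_of_le one_pos hM
  set B : Matrix (Fin n) (Fin n) ℝ := A - G * C with hBdef
  set 𝔹 : EuclideanSpace ℝ (Fin n) →L[ℝ] EuclideanSpace ℝ (Fin n) :=
    Matrix.toEuclideanCLM (𝕜 := ℝ) B with h𝔹def
  set e : ℝ → EuclideanSpace ℝ (Fin n) := fun s => xhat s - x s with hedef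
  set h : ℝ → EuclideanSpace ℝ (Fin n) := fun s => ghat (xhat s) - g (x s) with hhdef
  -- derivative of the error
  have hmulGC : ∀ v : EuclideanSpace ℝ (Fin n),
      Matrix.toEuclideanLin (G * C) v
        = Matrix.toEuclideanLin G (Matrix.toEuclideanLin C v) := by
    intro v
    simp [Matrix.toEuclideanLin_apply, Matrix.mulVec_mulVec]
  have he : ∀ s, HasDerivAt e (𝔹 (e s) + h s) s := by
    intro s
    have h1 := (hxhat s).sub (hx s)
    refine h1.congr_deriv ?_
    have h2 : 𝔹 (e s) = Matrix.toEuclideanLin (A - G * C) (xhat s - x s) := rfl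
    have expand : ∀ v : EuclideanSpace ℝ (Fin n),
        Matrix.toEuclideanLin (A - G * C) v
          = Matrix.toEuclideanLin A v - Matrix.toEuclideanLin G (Matrix.toEuclideanLin C v) := by
      intro v
      rw [map_sub, LinearMap.sub_apply, hmulGC]
    rw [h2, expand]
    simp only [hhdef, map_sub]
    abel
  have he_cont : Continuous e :=
    continuous_iff_continuousAt.mpr fun s => (he s).continuousAt
  have hnormh : ∀ s, ‖h s‖ ≤ L * ‖e s‖ + ε := fun s => hg _ _
  -- operator exponential bound
  have hcontCLM : Continuous ⇑(Matrix.toEuclideanCLM (𝕜 := ℝ) (n := Fin n)) :=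
    LinearMap.continuous_of_finiteDimensional
      ((AlgHomClass.toAlgHom (Matrix.toEuclideanCLM (𝕜 := ℝ) (n := Fin n))).toLinearMap)
  have hEnorm : ∀ τ : ℝ, 0 ≤ τ → ‖exp (τ • 𝔹)‖ ≤ M * Real.exp (-α * τ) := by
    intro τ hτ
    letI : SeminormedRing (Matrix (Fin n) (Fin n) ℝ) := Matrix.linftyOpSemiNormedRing
    letI : NormedRing (Matrix (Fin n) (Fin n) ℝ) := Matrix.linftyOpNormedRing
    letI : NormedAlgebra ℝ (Matrix (Fin n) (Fin n) ℝ) := Matrix.linftyOpNormedAlgebra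
    have h1 : exp (τ • 𝔹) = Matrix.toEuclideanCLM (𝕜 := ℝ) (exp (τ • B)) := by
      rw [h𝔹def, ← _root_.map_smul]
      exact (map_exp_of_mem_ball (𝕂 := ℝ) (Matrix.toEuclideanCLM (𝕜 := ℝ) (n := Fin n)) hcontCLM (τ • B)
        ((expSeries_radius_eq_top ℝ (Matrix (Fin n) (Fin n) ℝ)).symm ▸ edist_lt_top _ _)).symm
    have h2 : exp (τ • 𝔹)
        = (Matrix.toEuclideanLin (exp (τ • B))).toContinuousLinearMap := by
      rw [h1]; ext v; rfl
    rw [h2]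
    exact hexp τ hτ
  -- variation of constants bound
  have key : ∀ τ : ℝ, 0 ≤ τ → ‖e τ‖ ≤ M * Real.exp (-α * τ) * ‖e 0‖
      + ∫ s in (0:ℝ)..τ, M * Real.exp (-α * (τ - s)) * (L * ‖e s‖ + ε) := by
    intro τ hτ
    set F : ℝ → EuclideanSpace ℝ (Fin n) := fun s => exp ((τ - s) • 𝔹) (e s) with hFdef
    have hop : ∀ s : ℝ, HasDerivAt (fun r : ℝ => exp ((τ - r) • 𝔹))
        ((-1 : ℝ) • (exp ((τ - s) • 𝔹) * 𝔹)) s := by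
      intro s
      have h1 := hasDerivAt_exp_smul_const (𝕂 := ℝ) 𝔹 (τ - s)
      have h2 : HasDerivAt (fun r : ℝ => τ - r) (-1) s := (hasDerivAt_id s).const_sub τ
      exact h1.scomp s h2
    have hF : ∀ s : ℝ, HasDerivAt F (exp ((τ - s) • 𝔹) (h s)) s := by
      intro s
      have h1 := (hop s).clm_apply (he s)
      refine h1.congr_deriv ?_
      simp only [ContinuousLinearMap.smul_apply, ContinuousLinearMap.mul_apply, map_add,
        neg_smul, one_smul, neg_add_eq_sub]
      abel
    have hFd : (fun s => exp ((τ - s) • 𝔹) (h s)) = deriv F :=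
      funext fun s => ((hF s).deriv).symm
    obtain ⟨Kb, hKb⟩ := (isCompact_uIcc (a := (0:ℝ)) (b := τ)).exists_bound_of_continuousOn
      he_cont.continuousOn
    have hKb0 : (0:ℝ) ≤ Kb := (norm_nonneg _).trans (hKb 0 Set.left_mem_uIcc)
    have hptbd : ∀ s ∈ Set.uIoc (0:ℝ) τ,
        ‖exp ((τ - s) • 𝔹) (h s)‖ ≤ M * Real.exp (-α * (τ - s)) * (L * ‖e s‖ + ε) := by
      intro s hs
      rw [Set.uIoc_of_le hτ] at hs
      have hE := hEnorm (τ - s) (by linarith [hs.2])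
      calc ‖exp ((τ - s) • 𝔹) (h s)‖ ≤ ‖exp ((τ - s) • 𝔹)‖ * ‖h s‖ :=
            ContinuousLinearMap.le_opNorm _ _
        _ ≤ (M * Real.exp (-α * (τ - s))) * (L * ‖e s‖ + ε) := by
            apply mul_le_mul hE (hnormh s) (norm_nonneg _)
            positivity
    have hbd : ∀ s ∈ Set.uIoc (0:ℝ) τ,
        ‖exp ((τ - s) • 𝔹) (h s)‖ ≤ M * (L * Kb + ε) := by
      intro s hs
      refine (hptbd s hs).trans ?_
      have hs' : s ∈ Set.uIcc (0:ℝ) τ := Set.uIoc_subset_uIcc hs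
      have h1 : Real.exp (-α * (τ - s)) ≤ 1 := by
        rw [Real.exp_le_one_iff]
        rw [Set.uIoc_of_le hτ] at hs
        nlinarith [hs.2]
      have h2 : ‖e s‖ ≤ Kb := hKb s hs'
      have h3 : (0:ℝ) ≤ ‖e s‖ := norm_nonneg _
      have h4 : L * ‖e s‖ + ε ≤ L * Kb + ε := by
        have := mul_le_mul_of_nonneg_left h2 hL
        linarith
      have h5 : (0:ℝ) < Real.exp (-α * (τ - s)) := Real.exp_pos _
      have h6 : (0:ℝ) ≤ L * Kb + ε := add_nonneg (mul_nonneg hL hKb0) hε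
      calc M * Real.exp (-α * (τ - s)) * (L * ‖e s‖ + ε)
          ≤ M * Real.exp (-α * (τ - s)) * (L * Kb + ε) :=
            mul_le_mul_of_nonneg_left h4 (by positivity)
        _ ≤ M * 1 * (L * Kb + ε) :=
            mul_le_mul_of_nonneg_right
              (mul_le_mul_of_nonneg_left h1 hM0.le) h6
        _ = M * (L * Kb + ε) := by ring
    have hInt : IntervalIntegrable (fun s => exp ((τ - s) • 𝔹) (h s)) volume 0 τ := by
      apply (intervalIntegrable_const (c := M * (L * Kb + ε))
        (μ := volume) (a := (0:ℝ)) (b := τ)).mono_fun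
      · rw [hFd]
        exact (stronglyMeasurable_deriv F).aestronglyMeasurable.restrict
      · refine ae_restrict_of_forall_mem measurableSet_uIoc ?_
        intro s hs
        have : ‖M * (L * Kb + ε)‖ = M * (L * Kb + ε) :=
          Real.norm_of_nonneg (by positivity)
        rw [this]
        exact hbd s hs
    have hFTC := intervalIntegral.integral_eq_sub_of_hasDerivAt (fun s _ => hF s) hInt
    have hFτ : F τ = e τ := by
      have h0 : (τ - τ) • 𝔹 = (0 : EuclideanSpace ℝ (Fin n) →L[ℝ] EuclideanSpace ℝ (Fin n)) := by
        rw [sub_self]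
        exact zero_smul ℝ 𝔹
      show (exp ((τ - τ) • 𝔹)) (e τ) = e τ
      rw [h0, NormedSpace.exp_zero, ContinuousLinearMap.one_apply]
    have hF0 : F 0 = exp (τ • 𝔹) (e 0) := by
      simp [hFdef]
    have he_eq : e τ = exp (τ • 𝔹) (e 0)
        + ∫ s in (0:ℝ)..τ, exp ((τ - s) • 𝔹) (h s) := by
      rw [hFTC, hFτ, hF0]
      abel
    have hgcont : Continuous fun s => M * Real.exp (-α * (τ - s)) * (L * ‖e s‖ + ε) :=
      ((continuous_const.mul (Real.continuous_exp.comp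
        (continuous_const.mul (continuous_const.sub continuous_id)))).mul
        ((continuous_const.mul he_cont.norm).add continuous_const))
    have hgint : IntervalIntegrable (fun s => M * Real.exp (-α * (τ - s)) * (L * ‖e s‖ + ε))
        volume 0 τ := hgcont.intervalIntegrable 0 τ
    have hni := intervalIntegral.norm_integral_le_of_norm_le hτ
      (ae_of_all _ fun s hs => hptbd s (by rwa [Set.uIoc_of_le hτ])) hgint
    have habs : |∫ s in (0:ℝ)..τ, M * Real.exp (-α * (τ - s)) * (L * ‖e s‖ + ε)|
        = ∫ s in (0:ℝ)..τ, M * Real.exp (-α * (τ - s)) * (L * ‖e s‖ + ε) := by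
      apply abs_of_nonneg
      apply intervalIntegral.integral_nonneg hτ
      intro s _
      have : (0:ℝ) ≤ L * ‖e s‖ + ε := by positivity
      positivity
    calc ‖e τ‖ = ‖exp (τ • 𝔹) (e 0) + ∫ s in (0:ℝ)..τ, exp ((τ - s) • 𝔹) (h s)‖ := by
          rw [← he_eq]
      _ ≤ ‖exp (τ • 𝔹) (e 0)‖ + ‖∫ s in (0:ℝ)..τ, exp ((τ - s) • 𝔹) (h s)‖ :=
          norm_add_le _ _
      _ ≤ M * Real.exp (-α * τ) * ‖e 0‖
          + ∫ s in (0:ℝ)..τ, M * Real.exp (-α * (τ - s)) * (L * ‖e s‖ + ε) := by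
          apply add_le_add
          · exact (ContinuousLinearMap.le_opNorm _ _).trans
              (mul_le_mul_of_nonneg_right (hEnorm τ hτ) (norm_nonneg _))
          · exact hni
  -- scalar Grönwall
  set u : ℝ → ℝ := fun s => Real.exp (α * s) * ‖e s‖ with hudef
  have hucont : Continuous u :=
    (Real.continuous_exp.comp (continuous_const.mul continuous_id)).mul he_cont.norm
  have H : ∀ τ, 0 ≤ τ → u τ ≤ M * ‖e 0‖
      + ∫ s in (0:ℝ)..τ, ((M * L) * u s + (M * ε) * Real.exp (α * s)) := by
    intro τ hτ
    have hI : Real.exp (α * τ)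
          * (∫ s in (0:ℝ)..τ, M * Real.exp (-α * (τ - s)) * (L * ‖e s‖ + ε))
        = ∫ s in (0:ℝ)..τ, ((M * L) * u s + (M * ε) * Real.exp (α * s)) := by
      rw [← intervalIntegral.integral_const_mul]
      apply intervalIntegral.integral_congr
      intro s _
      have hxy : Real.exp (α * τ) * Real.exp (-α * (τ - s)) = Real.exp (α * s) := by
        rw [← Real.exp_add]; congr 1; ring
      calc Real.exp (α * τ) * (M * Real.exp (-α * (τ - s)) * (L * ‖e s‖ + ε))
          = (Real.exp (α * τ) * Real.exp (-α * (τ - s))) * (M * (L * ‖e s‖ + ε)) := by ring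
        _ = Real.exp (α * s) * (M * (L * ‖e s‖ + ε)) := by rw [hxy]
        _ = (M * L) * (Real.exp (α * s) * ‖e s‖) + (M * ε) * Real.exp (α * s) := by ring
    have hone : Real.exp (α * τ) * Real.exp (-α * τ) = 1 := by
      rw [← Real.exp_add]
      have : α * τ + -α * τ = 0 := by ring
      rw [this, Real.exp_zero]
    calc u τ = Real.exp (α * τ) * ‖e τ‖ := rfl
      _ ≤ Real.exp (α * τ) * (M * Real.exp (-α * τ) * ‖e 0‖
          + ∫ s in (0:ℝ)..τ, M * Real.exp (-α * (τ - s)) * (L * ‖e s‖ + ε)) :=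
          mul_le_mul_of_nonneg_left (key τ hτ) (Real.exp_pos _).le
      _ = M * ‖e 0‖ * (Real.exp (α * τ) * Real.exp (-α * τ))
          + Real.exp (α * τ)
            * ∫ s in (0:ℝ)..τ, M * Real.exp (-α * (τ - s)) * (L * ‖e s‖ + ε) := by ring
      _ = M * ‖e 0‖ + ∫ s in (0:ℝ)..τ, ((M * L) * u s + (M * ε) * Real.exp (α * s)) := by
          rw [hone, hI]; ring
  have hgr := aux_gronwall u hucont (M * ‖e 0‖) (M * L) (M * ε) α
    (by positivity) (by positivity) hMLα H
  intro t ht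
  have hut := hgr t ht
  -- unwind
  have hq : (0:ℝ) ≤ M * ε / (α - M * L) :=
    div_nonneg (by positivity) (by linarith)
  have h1 : Real.exp ((M * L - α) * t) * Real.exp (α * t) = Real.exp ((M * L) * t) := by
    rw [← Real.exp_add]; congr 1; ring
  have h2 : (0:ℝ) < Real.exp (α * t) := Real.exp_pos _
  have hfin : Real.exp (α * t) * ‖e t‖
      ≤ Real.exp (α * t) * (M * Real.exp ((M * L - α) * t) * ‖e 0‖ + M * ε / (α - M * L)) := by
    have h3 : (0:ℝ) < Real.exp ((M * L) * t) := Real.exp_pos _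
    have hut' : Real.exp (α * t) * ‖e t‖
        ≤ M * ‖e 0‖ * Real.exp ((M * L) * t)
          + M * ε / (α - M * L) * (Real.exp (α * t) - Real.exp ((M * L) * t)) := hut
    have hgoal : Real.exp (α * t)
          * (M * Real.exp ((M * L - α) * t) * ‖e 0‖ + M * ε / (α - M * L))
        = M * ‖e 0‖ * Real.exp ((M * L) * t)
          + M * ε / (α - M * L) * Real.exp (α * t) := by
      calc Real.exp (α * t)
            * (M * Real.exp ((M * L - α) * t) * ‖e 0‖ + M * ε / (α - M * L))
          = M * ‖e 0‖ * (Real.exp ((M * L - α) * t) * Real.exp (α * t))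
            + M * ε / (α - M * L) * Real.exp (α * t) := by ring
        _ = M * ‖e 0‖ * Real.exp ((M * L) * t)
            + M * ε / (α - M * L) * Real.exp (α * t) := by rw [h1]
    rw [hgoal]
    linarith [mul_nonneg hq h3.le]
  have := le_of_mul_le_mul_left hfin h2
  simpa [hedef] using this
end

section
/- Adjoint gradient identity (finite-dimensional/linear case): let z : [t₀,t_f] → ℝⁿ solve ż = A(θ) z with z(t₀) = z₀, where A : ℝ → ℝ^{n×n} is smooth in the scalar parameter θ, let L : ℝⁿ → ℝ be smooth, and ℓ(θ) = ∫_{t₀}^{t_f} L(z(t;θ)) dt. If p : [t₀,t_f] → ℝⁿ (row vector) solves ṗ = −p A(θ) − ∇L(z(t)) with p(t_f) = 0, then dℓ/dθ = ∫_{t₀}^{t_f} p(t)·(dA/dθ)·z(t) dt. -/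
open scoped Matrix
open MeasureTheory Filter Topology Set intervalIntegral

section helpers
variable {n : ℕ}

lemma mulVec_norm_le' (M : Matrix (Fin n) (Fin n) ℝ) (v : Fin n → ℝ) :
    ‖M.mulVec v‖ ≤ (∑ i, ∑ j, |M i j|) * ‖v‖ := by
  have h0 : (0:ℝ) ≤ (∑ i, ∑ j, |M i j|) * ‖v‖ :=
    mul_nonneg (Finset.sum_nonneg fun i _ => Finset.sum_nonneg fun j _ => abs_nonneg _)
      (norm_nonneg _)
  rw [pi_norm_le_iff_of_nonneg h0]
  intro i
  have h1 : ‖M.mulVec v i‖ = |∑ j, M i j * v j| := by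
    simp [Matrix.mulVec, dotProduct, Real.norm_eq_abs]
  rw [h1]
  calc |∑ j, M i j * v j| ≤ ∑ j, |M i j * v j| := Finset.abs_sum_le_sum_abs _ _
    _ ≤ ∑ j, |M i j| * ‖v‖ := by
        refine Finset.sum_le_sum fun j _ => ?_
        rw [abs_mul]
        exact mul_le_mul_of_nonneg_left (norm_le_pi_norm v j) (abs_nonneg _)
    _ = (∑ j, |M i j|) * ‖v‖ := by rw [Finset.sum_mul]
    _ ≤ (∑ i, ∑ j, |M i j|) * ‖v‖ := by
        refine mul_le_mul_of_nonneg_right ?_ (norm_nonneg _)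
        exact Finset.single_le_sum (f := fun i => ∑ j, |M i j|)
          (fun i _ => Finset.sum_nonneg fun j _ => abs_nonneg _) (Finset.mem_univ i)

lemma deriv_loc_bound {f : ℝ → ℝ} {f' x₀ : ℝ} (h : HasDerivAt f f' x₀) :
    ∀ᶠ θ in 𝓝 x₀, |f θ - f x₀| ≤ (|f'| + 1) * |θ - x₀| := by
  have h1 := (hasDerivAt_iff_isLittleO.mp h).bound one_pos
  filter_upwards [h1] with θ hθ
  have h2 : |f θ - f x₀ - (θ - x₀) * f'| ≤ |θ - x₀| := by
    simpa [Real.norm_eq_abs, smul_eq_mul] using hθ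
  calc |f θ - f x₀| = |(f θ - f x₀ - (θ - x₀) * f') + (θ - x₀) * f'| := by ring_nf
    _ ≤ |f θ - f x₀ - (θ - x₀) * f'| + |(θ - x₀) * f'| := abs_add_le _ _
    _ ≤ |θ - x₀| + |f'| * |θ - x₀| := by
        rw [abs_mul]
        exact add_le_add h2 (by rw [mul_comm])
    _ = (|f'| + 1) * |θ - x₀| := by ring

lemma continuous_mulVec' (M : Matrix (Fin n) (Fin n) ℝ) {α : Type*} [TopologicalSpace α]
    {f : α → Fin n → ℝ} (hf : Continuous f) : Continuous fun x => M.mulVec (f x) := by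
  refine continuous_pi fun i => ?_
  simp only [Matrix.mulVec, dotProduct]
  exact continuous_finset_sum _ fun j _ => continuous_const.mul ((continuous_apply j).comp hf)

lemma continuous_dot' {α : Type*} [TopologicalSpace α] {f g : α → Fin n → ℝ}
    (hf : Continuous f) (hg : Continuous g) : Continuous fun x => f x ⬝ᵥ g x := by
  simp only [dotProduct]
  exact continuous_finset_sum _ fun i _ =>
    ((continuous_apply i).comp hf).mul ((continuous_apply i).comp hg)

lemma hasDerivAt_dot {f g : ℝ → Fin n → ℝ} {f' g' : Fin n → ℝ} {x : ℝ}
    (hf : HasDerivAt f f' x) (hg : HasDerivAt g g' x) :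
    HasDerivAt (fun t => f t ⬝ᵥ g t) (f' ⬝ᵥ g x + f x ⬝ᵥ g') x := by
  simp only [dotProduct]
  have := HasDerivAt.fun_sum (u := Finset.univ)
    (fun i _ => ((hasDerivAt_pi.mp hf) i).mul ((hasDerivAt_pi.mp hg) i))
  simpa [Finset.sum_add_distrib] using this

end helpers

/-- Adjoint gradient identity for a linear parameterized vector field `F(z,θ) = A(θ)z`
and loss `ℓ(θ) = ∫ L(z(t;θ)) dt`: if the adjoint `p` solves the backward adjoint ODE
`ṗ = -p A(θ₀) - ∇L(z)` with `p(t_f) = 0`, then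
`dℓ/dθ = ∫ p(t) · (dA/dθ) z(t) dt` at `θ₀`. -/
theorem adjoint_gradient_identity
    (n : ℕ) (t₀ tf : ℝ) (ht : t₀ ≤ tf)
    (A : ℝ → Matrix (Fin n) (Fin n) ℝ) (A' : Matrix (Fin n) (Fin n) ℝ) (θ₀ : ℝ)
    (hA : ∀ i j, HasDerivAt (fun θ => A θ i j) (A' i j) θ₀)
    (z₀ : Fin n → ℝ) (z : ℝ → ℝ → (Fin n → ℝ))
    (hz_ode : ∀ θ t, HasDerivAt (fun s => z θ s) ((A θ).mulVec (z θ t)) t)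
    (hz_init : ∀ θ, z θ t₀ = z₀)
    (δz : ℝ → (Fin n → ℝ)) (hδz_cont : Continuous δz)
    (hδz : ∀ t, HasDerivAt (fun θ => z θ t) (δz t) θ₀)
    (hz_cont : Continuous fun p : ℝ × ℝ => z p.1 p.2)
    (L : (Fin n → ℝ) → ℝ) (hL : ContDiff ℝ 1 L)
    (gradL : (Fin n → ℝ) → (Fin n → ℝ))
    (hgrad : ∀ x u, fderiv ℝ L x u = gradL x ⬝ᵥ u)
    (p : ℝ → (Fin n → ℝ))
    (hp_ode : ∀ t, HasDerivAt p (-(Matrix.vecMul (p t) (A θ₀)) - gradL (z θ₀ t)) t)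
    (hp_final : p tf = 0) :
    HasDerivAt (fun θ => ∫ t in t₀..tf, L (z θ t))
      (∫ t in t₀..tf, p t ⬝ᵥ A'.mulVec (z θ₀ t)) θ₀ := by
  classical
  -- basic continuity facts
  have hzc : ∀ θ, Continuous fun t => z θ t := fun θ =>
    hz_cont.comp (continuous_const.prodMk continuous_id)
  have hpc : Continuous p := by
    rw [continuous_iff_continuousAt]; exact fun t => (hp_ode t).continuousAt
  have hLc : Continuous L := hL.continuous
  have hgradLc : Continuous gradL := by
    have h1 : Continuous fun x => fderiv ℝ L x := hL.continuous_fderiv one_ne_zero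
    have h2 : gradL = fun x j => fderiv ℝ L x (Pi.single j 1) := by
      funext x j
      rw [hgrad, dotProduct_single, mul_one]
    rw [h2]
    exact continuous_pi fun j =>
      (ContinuousLinearMap.apply ℝ ℝ (Pi.single j 1)).continuous.comp h1
  -- compact bound on z
  obtain ⟨Cz, hCzaux⟩ := ((isCompact_closedBall θ₀ 1).prod isCompact_Icc).exists_bound_of_continuousOn
    hz_cont.continuousOn
  have hCz : ∀ θ t, θ ∈ Metric.closedBall θ₀ 1 → t ∈ Set.Icc t₀ tf → ‖z θ t‖ ≤ Cz :=
    fun θ t hθ ht' => hCzaux (θ, t) (Set.mk_mem_prod hθ ht')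
  have hθ₀ball : θ₀ ∈ Metric.closedBall θ₀ 1 := Metric.mem_closedBall_self zero_le_one
  have hCz0 : 0 ≤ Cz :=
    le_trans (norm_nonneg _) (hCz θ₀ t₀ hθ₀ball (Set.left_mem_Icc.mpr ht))
  -- Lipschitz bound for L on the closed ball of radius Cz
  obtain ⟨CL, hCL⟩ := (isCompact_closedBall (0 : Fin n → ℝ) Cz).exists_bound_of_continuousOn
    (hL.continuous_fderiv one_ne_zero).continuousOn
  have hCL0 : 0 ≤ CL := le_trans (norm_nonneg _) (hCL 0 (Metric.mem_closedBall_self hCz0))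
  have hLip : ∀ x ∈ Metric.closedBall (0 : Fin n → ℝ) Cz,
      ∀ y ∈ Metric.closedBall (0 : Fin n → ℝ) Cz, ‖L y - L x‖ ≤ CL * ‖y - x‖ := by
    intro x hx y hy
    exact Convex.norm_image_sub_le_of_norm_fderiv_le
      (fun u _ => (hL.differentiable one_ne_zero).differentiableAt) hCL
      (convex_closedBall _ _) hx hy
  -- constants for A
  set K₁ : ℝ := ∑ i, ∑ j, (|A' i j| + 1) with hK₁def
  have hK₁0 : 0 ≤ K₁ :=
    Finset.sum_nonneg fun i _ => Finset.sum_nonneg fun j _ => by positivity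
  set cA0 : ℝ := ∑ i, ∑ j, |A θ₀ i j| with hcA0def
  have hcA00 : 0 ≤ cA0 :=
    Finset.sum_nonneg fun i _ => Finset.sum_nonneg fun j _ => abs_nonneg _
  set K₂ : ℝ := cA0 + K₁ + 1 with hK₂def
  have hK₂pos : 0 < K₂ := by rw [hK₂def]; linarith
  -- eventual entrywise bound for A θ - A θ₀
  have hAev : ∀ᶠ θ in 𝓝 θ₀, ∀ i, ∀ j, |A θ i j - A θ₀ i j| ≤ (|A' i j| + 1) * |θ - θ₀| := by
    rw [eventually_all]
    intro i
    rw [eventually_all]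
    intro j
    exact deriv_loc_bound (hA i j)
  have hAdiff : ∀ᶠ θ in 𝓝 θ₀, (∑ i, ∑ j, |A θ i j - A θ₀ i j|) ≤ K₁ * |θ - θ₀| := by
    filter_upwards [hAev] with θ hθ
    rw [hK₁def, Finset.sum_mul]
    refine Finset.sum_le_sum fun i _ => ?_
    rw [Finset.sum_mul]
    exact Finset.sum_le_sum fun j _ => hθ i j
  -- Gronwall bound
  set CG : ℝ := Real.exp (K₂ * (tf - t₀)) / K₂ with hCGdef
  have hCG0 : 0 ≤ CG := div_nonneg (Real.exp_pos _).le hK₂pos.le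
  set CB : ℝ := K₁ * Cz * CG with hCBdef
  have hCB0 : 0 ≤ CB := mul_nonneg (mul_nonneg hK₁0 hCz0) hCG0
  have hGR : ∀ᶠ θ in 𝓝 θ₀, ∀ t ∈ Set.Icc t₀ tf, ‖z θ t - z θ₀ t‖ ≤ CB * |θ - θ₀| := by
    filter_upwards [hAdiff, Metric.closedBall_mem_nhds θ₀ zero_lt_one] with θ hθA hθball
    have hθ1 : |θ - θ₀| ≤ 1 := by
      rw [← Real.dist_eq]; exact Metric.mem_closedBall.mp hθball
    have hAno : (∑ i, ∑ j, |A θ i j|) ≤ K₂ := by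
      have : (∑ i, ∑ j, |A θ i j|) ≤ ∑ i, ∑ j, (|A θ i j - A θ₀ i j| + |A θ₀ i j|) := by
        refine Finset.sum_le_sum fun i _ => Finset.sum_le_sum fun j _ => ?_
        calc |A θ i j| = |(A θ i j - A θ₀ i j) + A θ₀ i j| := by ring_nf
          _ ≤ |A θ i j - A θ₀ i j| + |A θ₀ i j| := abs_add_le _ _
      rw [hK₂def]
      calc (∑ i, ∑ j, |A θ i j|)
          ≤ (∑ i, ∑ j, |A θ i j - A θ₀ i j|) + cA0 := by
            rw [hcA0def, ← Finset.sum_add_distrib]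
            refine le_trans this (le_of_eq ?_)
            congr 1; funext i
            rw [← Finset.sum_add_distrib]
        _ ≤ K₁ * |θ - θ₀| + cA0 := by linarith
        _ ≤ cA0 + K₁ + 1 := by nlinarith
    set f : ℝ → Fin n → ℝ := fun t => z θ t - z θ₀ t with hfdef
    set ε : ℝ := K₁ * Cz * |θ - θ₀| with hεdef
    have hε0 : 0 ≤ ε := mul_nonneg (mul_nonneg hK₁0 hCz0) (abs_nonneg _)
    have key := norm_le_gronwallBound_of_norm_deriv_right_le (f := f)
      (f' := fun t => (A θ).mulVec (z θ t) - (A θ₀).mulVec (z θ₀ t))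
      (δ := 0) (K := K₂) (ε := ε) (a := t₀) (b := tf)
      (((hzc θ).sub (hzc θ₀)).continuousOn)
      (fun x _ => (((hz_ode θ x).sub (hz_ode θ₀ x))).hasDerivWithinAt)
      (by simp [hfdef, hz_init])
      ?_
    · intro t htmem
      have h1 := key t htmem
      have h2 : gronwallBound 0 K₂ ε (t - t₀) ≤ ε * CG := by
        rw [gronwallBound_of_K_ne_0 (ne_of_gt hK₂pos)]
        have h3 : Real.exp (K₂ * (t - t₀)) - 1 ≤ Real.exp (K₂ * (tf - t₀)) := by
          have : Real.exp (K₂ * (t - t₀)) ≤ Real.exp (K₂ * (tf - t₀)) :=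
            Real.exp_le_exp.mpr (by nlinarith [htmem.2])
          linarith
        have h4 : ε / K₂ * (Real.exp (K₂ * (t - t₀)) - 1) ≤ ε / K₂ * Real.exp (K₂ * (tf - t₀)) :=
          mul_le_mul_of_nonneg_left h3 (div_nonneg hε0 hK₂pos.le)
        calc (0 : ℝ) * Real.exp (K₂ * (t - t₀)) + ε / K₂ * (Real.exp (K₂ * (t - t₀)) - 1)
            = ε / K₂ * (Real.exp (K₂ * (t - t₀)) - 1) := by ring
          _ ≤ ε / K₂ * Real.exp (K₂ * (tf - t₀)) := h4
          _ = ε * CG := by rw [hCGdef]; ring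
      calc ‖z θ t - z θ₀ t‖ = ‖f t‖ := rfl
        _ ≤ gronwallBound 0 K₂ ε (t - t₀) := h1
        _ ≤ ε * CG := h2
        _ = CB * |θ - θ₀| := by rw [hCBdef, hεdef]; ring
    · intro x hx
      have hxIcc : x ∈ Set.Icc t₀ tf := Set.Ico_subset_Icc_self hx
      have hsplit : (A θ).mulVec (z θ x) - (A θ₀).mulVec (z θ₀ x)
          = (A θ).mulVec (f x) + (A θ - A θ₀).mulVec (z θ₀ x) := by
        rw [hfdef]
        simp only [Matrix.mulVec_sub, Matrix.sub_mulVec]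
        abel
      change ‖(A θ).mulVec (z θ x) - (A θ₀).mulVec (z θ₀ x)‖ ≤ K₂ * ‖f x‖ + ε
      rw [hsplit]
      calc ‖(A θ).mulVec (f x) + (A θ - A θ₀).mulVec (z θ₀ x)‖
          ≤ ‖(A θ).mulVec (f x)‖ + ‖(A θ - A θ₀).mulVec (z θ₀ x)‖ := norm_add_le _ _
        _ ≤ (∑ i, ∑ j, |A θ i j|) * ‖f x‖ + (∑ i, ∑ j, |(A θ - A θ₀) i j|) * ‖z θ₀ x‖ :=
            add_le_add (mulVec_norm_le' _ _) (mulVec_norm_le' _ _)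
        _ ≤ K₂ * ‖f x‖ + (K₁ * |θ - θ₀|) * Cz := by
            refine add_le_add (mul_le_mul_of_nonneg_right hAno (norm_nonneg _)) ?_
            have he : (∑ i, ∑ j, |(A θ - A θ₀) i j|) ≤ K₁ * |θ - θ₀| := by
              simpa [Matrix.sub_apply] using hθA
            exact mul_le_mul he (hCz θ₀ x hθ₀ball hxIcc) (norm_nonneg _)
              (mul_nonneg hK₁0 (abs_nonneg _))
        _ = K₂ * ‖f x‖ + ε := by rw [hεdef]; ring
  -- pointwise θ-derivative of the vector field
  have hFd : ∀ s, HasDerivAt (fun θ => (A θ).mulVec (z θ s))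
      (A'.mulVec (z θ₀ s) + (A θ₀).mulVec (δz s)) θ₀ := by
    intro s
    rw [hasDerivAt_pi]
    intro i
    have hcomp : ∀ j, HasDerivAt (fun θ => z θ s j) (δz s j) θ₀ :=
      fun j => (hasDerivAt_pi.mp (hδz s)) j
    have hsum : HasDerivAt (fun θ => ∑ j, A θ i j * z θ s j)
        (∑ j, (A' i j * z θ₀ s j + A θ₀ i j * δz s j)) θ₀ :=
      HasDerivAt.fun_sum fun j _ => (hA i j).mul (hcomp j)
    simpa [Matrix.mulVec, dotProduct, Finset.sum_add_distrib] using hsum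
  -- uniform bound for the slopes of the vector field
  set Dbd : ℝ := K₁ * Cz + cA0 * CB with hDbddef
  have hGbd : ∀ᶠ θ in 𝓝[≠] θ₀, ∀ s ∈ Set.Icc t₀ tf,
      ‖(θ - θ₀)⁻¹ • ((A θ).mulVec (z θ s) - (A θ₀).mulVec (z θ₀ s))‖ ≤ Dbd := by
    filter_upwards [nhdsWithin_le_nhds hGR, nhdsWithin_le_nhds hAdiff,
      nhdsWithin_le_nhds (Metric.closedBall_mem_nhds θ₀ zero_lt_one),
      self_mem_nhdsWithin] with θ hθGR hθA hθball hθmem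
    have hθne : θ ≠ θ₀ := hθmem
    intro s hs
    have hne : θ - θ₀ ≠ 0 := sub_ne_zero.mpr hθne
    have hsplit : (A θ).mulVec (z θ s) - (A θ₀).mulVec (z θ₀ s)
        = (A θ - A θ₀).mulVec (z θ s) + (A θ₀).mulVec (z θ s - z θ₀ s) := by
      simp only [Matrix.mulVec_sub, Matrix.sub_mulVec]; abel
    have hb1 : ‖(A θ - A θ₀).mulVec (z θ s)‖ ≤ (K₁ * |θ - θ₀|) * Cz := by
      refine le_trans (mulVec_norm_le' _ _) ?_
      refine mul_le_mul ?_ (hCz θ s hθball hs) (norm_nonneg _)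
        (mul_nonneg hK₁0 (abs_nonneg _))
      simpa [Matrix.sub_apply] using hθA
    have hb2 : ‖(A θ₀).mulVec (z θ s - z θ₀ s)‖ ≤ cA0 * (CB * |θ - θ₀|) := by
      refine le_trans (mulVec_norm_le' _ _) ?_
      exact mul_le_mul (le_refl cA0) (hθGR s hs) (norm_nonneg _) hcA00
    rw [norm_smul, hsplit]
    calc ‖(θ - θ₀)⁻¹‖ * ‖(A θ - A θ₀).mulVec (z θ s) + (A θ₀).mulVec (z θ s - z θ₀ s)‖
        ≤ |θ - θ₀|⁻¹ * ((K₁ * |θ - θ₀|) * Cz + cA0 * (CB * |θ - θ₀|)) := by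
          rw [Real.norm_eq_abs, abs_inv]
          exact mul_le_mul_of_nonneg_left
            (le_trans (norm_add_le _ _) (add_le_add hb1 hb2))
            (inv_nonneg.mpr (abs_nonneg _))
      _ = (|θ - θ₀|⁻¹ * |θ - θ₀|) * (K₁ * Cz + cA0 * CB) := by ring
      _ = Dbd := by rw [inv_mul_cancel₀ (abs_ne_zero.mpr hne), one_mul, hDbddef]
  -- the variation equation, in integral form
  set φ : ℝ → Fin n → ℝ := fun s => A'.mulVec (z θ₀ s) + (A θ₀).mulVec (δz s) with hφdef
  have hφc : Continuous φ :=
    (continuous_mulVec' A' (hzc θ₀)).add (continuous_mulVec' (A θ₀) hδz_cont)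
  have hδz_eq : ∀ t ∈ Set.Icc t₀ tf, δz t = ∫ s in t₀..t, φ s := by
    intro t htmem
    have hFTC : ∀ θ, z θ t - z θ₀ t
        = ∫ s in t₀..t, ((A θ).mulVec (z θ s) - (A θ₀).mulVec (z θ₀ s)) := by
      intro θ
      have i1 : ∫ s in t₀..t, (A θ).mulVec (z θ s) = z θ t - z θ t₀ :=
        intervalIntegral.integral_eq_sub_of_hasDerivAt (fun s _ => hz_ode θ s)
          ((continuous_mulVec' (A θ) (hzc θ)).intervalIntegrable _ _)
      have i2 : ∫ s in t₀..t, (A θ₀).mulVec (z θ₀ s) = z θ₀ t - z θ₀ t₀ :=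
        intervalIntegral.integral_eq_sub_of_hasDerivAt (fun s _ => hz_ode θ₀ s)
          ((continuous_mulVec' (A θ₀) (hzc θ₀)).intervalIntegrable _ _)
      rw [intervalIntegral.integral_sub
          ((continuous_mulVec' (A θ) (hzc θ)).intervalIntegrable _ _)
          ((continuous_mulVec' (A θ₀) (hzc θ₀)).intervalIntegrable _ _), i1, i2,
        hz_init θ, hz_init θ₀]
      abel
    have hlim : Tendsto (fun θ => ∫ s in t₀..t,
        (θ - θ₀)⁻¹ • ((A θ).mulVec (z θ s) - (A θ₀).mulVec (z θ₀ s))) (𝓝[≠] θ₀)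
        (𝓝 (∫ s in t₀..t, φ s)) := by
      refine intervalIntegral.tendsto_integral_filter_of_dominated_convergence
        (fun _ => Dbd) ?_ ?_ ?_ ?_
      · filter_upwards [self_mem_nhdsWithin] with θ _
        exact (show Continuous fun s => (θ - θ₀)⁻¹ • ((A θ).mulVec (z θ s) - (A θ₀).mulVec (z θ₀ s)) from
          (continuous_const : Continuous fun _ : ℝ => (θ - θ₀)⁻¹).smul ((continuous_mulVec' (A θ) (hzc θ)).sub
          (continuous_mulVec' (A θ₀) (hzc θ₀)))).aestronglyMeasurable
      · filter_upwards [hGbd] with θ hθ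
        refine ae_of_all _ fun s hs => hθ s ?_
        have hs' : s ∈ Set.Ioc t₀ t := by rwa [Set.uIoc_of_le htmem.1] at hs
        exact ⟨le_of_lt hs'.1, le_trans hs'.2 htmem.2⟩
      · exact intervalIntegrable_const
      · refine ae_of_all _ fun s _ => ?_
        have hds := hasDerivAt_iff_tendsto_slope.mp (hFd s)
        refine hds.congr fun θ => ?_
        rw [slope_def_module]
    have hslope := hasDerivAt_iff_tendsto_slope.mp (hδz t)
    have hslope' : Tendsto (fun θ => ∫ s in t₀..t,
        (θ - θ₀)⁻¹ • ((A θ).mulVec (z θ s) - (A θ₀).mulVec (z θ₀ s))) (𝓝[≠] θ₀)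
        (𝓝 (δz t)) := by
      refine hslope.congr fun θ => ?_
      rw [slope_def_module, hFTC θ, ← intervalIntegral.integral_smul]
    exact tendsto_nhds_unique hslope' hlim
  -- integration by parts with the adjoint
  set h : ℝ → Fin n → ℝ := fun t => ∫ s in t₀..t, φ s with hhdef
  have hhd : ∀ t, HasDerivAt h (φ t) t := fun t =>
    intervalIntegral.integral_hasDerivAt_right (hφc.intervalIntegrable _ _)
      (hφc.stronglyMeasurableAtFilter _ _) hφc.continuousAt
  have hhc : Continuous h := by
    rw [continuous_iff_continuousAt]; exact fun t => (hhd t).continuousAt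
  set q' : ℝ → ℝ := fun t =>
    (-(Matrix.vecMul (p t) (A θ₀)) - gradL (z θ₀ t)) ⬝ᵥ h t + p t ⬝ᵥ φ t with hq'def
  have hq : ∀ t, HasDerivAt (fun t => p t ⬝ᵥ h t) (q' t) t := fun t =>
    hasDerivAt_dot (hp_ode t) (hhd t)
  have hvecMulc : Continuous fun t => Matrix.vecMul (p t) (A θ₀) := by
    have he : (fun t => Matrix.vecMul (p t) (A θ₀)) = fun t => (A θ₀)ᵀ.mulVec (p t) := by
      funext t; rw [Matrix.mulVec_transpose]
    rw [he]; exact continuous_mulVec' _ hpc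
  have hq'c : Continuous q' :=
    (continuous_dot' ((hvecMulc.neg).sub (hgradLc.comp (hzc θ₀))) hhc).add
      (continuous_dot' hpc hφc)
  have hIBP : ∫ t in t₀..tf, q' t = 0 := by
    rw [intervalIntegral.integral_eq_sub_of_hasDerivAt (fun t _ => hq t)
      (hq'c.intervalIntegrable _ _)]
    have h0 : h t₀ = 0 := by
      rw [hhdef]; exact intervalIntegral.integral_same
    rw [hp_final, h0]
    simp
  have hq'eq : ∀ t ∈ Set.uIcc t₀ tf,
      q' t = p t ⬝ᵥ A'.mulVec (z θ₀ t) - gradL (z θ₀ t) ⬝ᵥ δz t := by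
    intro t htmem
    have htI : t ∈ Set.Icc t₀ tf := by rwa [Set.uIcc_of_le ht] at htmem
    have hht : h t = δz t := (hδz_eq t htI).symm
    rw [hq'def]
    simp only [hht, hφdef]
    rw [sub_dotProduct, neg_dotProduct, dotProduct_add,
      Matrix.dotProduct_mulVec, Matrix.dotProduct_mulVec]
    ring
  have hkey : ∫ t in t₀..tf, gradL (z θ₀ t) ⬝ᵥ δz t
      = ∫ t in t₀..tf, p t ⬝ᵥ A'.mulVec (z θ₀ t) := by
    have e1 : ∫ t in t₀..tf, q' t
        = ∫ t in t₀..tf, (p t ⬝ᵥ A'.mulVec (z θ₀ t) - gradL (z θ₀ t) ⬝ᵥ δz t) :=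
      intervalIntegral.integral_congr hq'eq
    have e2 : ∫ t in t₀..tf, (p t ⬝ᵥ A'.mulVec (z θ₀ t) - gradL (z θ₀ t) ⬝ᵥ δz t)
        = (∫ t in t₀..tf, p t ⬝ᵥ A'.mulVec (z θ₀ t))
          - ∫ t in t₀..tf, gradL (z θ₀ t) ⬝ᵥ δz t :=
      intervalIntegral.integral_sub
        ((continuous_dot' hpc (continuous_mulVec' A' (hzc θ₀))).intervalIntegrable _ _)
        ((continuous_dot' (hgradLc.comp (hzc θ₀)) hδz_cont).intervalIntegrable _ _)
    rw [hIBP, e2] at e1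
    linarith
  -- differentiate the loss under the integral sign
  rw [← hkey, hasDerivAt_iff_tendsto_slope]
  have hLd : ∀ t, HasDerivAt (fun θ => L (z θ t)) (gradL (z θ₀ t) ⬝ᵥ δz t) θ₀ := by
    intro t
    have hcomp := ((hL.differentiable one_ne_zero) (z θ₀ t)).hasFDerivAt.comp_hasDerivAt θ₀ (hδz t)
    rw [← hgrad]
    exact hcomp
  have hmain : Tendsto (fun θ => ∫ t in t₀..tf, (θ - θ₀)⁻¹ • (L (z θ t) - L (z θ₀ t)))
      (𝓝[≠] θ₀) (𝓝 (∫ t in t₀..tf, gradL (z θ₀ t) ⬝ᵥ δz t)) := by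
    refine intervalIntegral.tendsto_integral_filter_of_dominated_convergence
      (fun _ => CL * CB) ?_ ?_ ?_ ?_
    · filter_upwards [self_mem_nhdsWithin] with θ _
      exact (show Continuous fun t => (θ - θ₀)⁻¹ • (L (z θ t) - L (z θ₀ t)) from
        (continuous_const : Continuous fun _ : ℝ => (θ - θ₀)⁻¹).smul
        ((hLc.comp (hzc θ)).sub (hLc.comp (hzc θ₀)))).aestronglyMeasurable
    · filter_upwards [nhdsWithin_le_nhds hGR,
        nhdsWithin_le_nhds (Metric.closedBall_mem_nhds θ₀ zero_lt_one),
        self_mem_nhdsWithin] with θ hθGR hθball hθmem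
      have hθne : θ ≠ θ₀ := hθmem
      refine ae_of_all _ fun t htmem => ?_
      have htI : t ∈ Set.Icc t₀ tf :=
        Set.Ioc_subset_Icc_self (by rwa [Set.uIoc_of_le ht] at htmem)
      have hne : θ - θ₀ ≠ 0 := sub_ne_zero.mpr hθne
      have hz1 : z θ t ∈ Metric.closedBall (0 : Fin n → ℝ) Cz :=
        mem_closedBall_zero_iff.mpr (hCz θ t hθball htI)
      have hz2 : z θ₀ t ∈ Metric.closedBall (0 : Fin n → ℝ) Cz :=
        mem_closedBall_zero_iff.mpr (hCz θ₀ t hθ₀ball htI)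
      have hLdiff : ‖L (z θ t) - L (z θ₀ t)‖ ≤ CL * (CB * |θ - θ₀|) :=
        le_trans (hLip _ hz2 _ hz1)
          (mul_le_mul_of_nonneg_left (hθGR t htI) hCL0)
      rw [norm_smul, Real.norm_eq_abs, abs_inv]
      calc |θ - θ₀|⁻¹ * ‖L (z θ t) - L (z θ₀ t)‖
          ≤ |θ - θ₀|⁻¹ * (CL * (CB * |θ - θ₀|)) :=
            mul_le_mul_of_nonneg_left hLdiff (inv_nonneg.mpr (abs_nonneg _))
        _ = (|θ - θ₀|⁻¹ * |θ - θ₀|) * (CL * CB) := by ring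
        _ = CL * CB := by rw [inv_mul_cancel₀ (abs_ne_zero.mpr hne), one_mul]
    · exact intervalIntegrable_const
    · refine ae_of_all _ fun t _ => ?_
      have hds := hasDerivAt_iff_tendsto_slope.mp (hLd t)
      refine hds.congr fun θ => ?_
      rw [slope_def_module]
  refine hmain.congr fun θ => ?_
  have e3 : (∫ t in t₀..tf, L (z θ t)) - ∫ t in t₀..tf, L (z θ₀ t)
      = ∫ t in t₀..tf, (L (z θ t) - L (z θ₀ t)) :=
    (intervalIntegral.integral_sub ((hLc.comp (hzc θ)).intervalIntegrable _ _)
      ((hLc.comp (hzc θ₀)).intervalIntegrable _ _)).symm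
  rw [slope_def_module, e3, ← intervalIntegral.integral_smul]
end
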